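/- arXiv:1802.00316 — 2 statements merged into one kernel-verified Lean document; each statement's English description precedes it below -/
import Mathlib

section
/- Let k be a field, ε ∈ k with ε² = 1, and let V be a 2-dimensional k-vector space with basis x₁, x₂. Define the linear map c : V ⊗ V → V ⊗ V by c(x_i ⊗ x₁) = ε x₁ ⊗ x_i and c(x_i ⊗ x₂) = (ε x₂ + x₁) ⊗ x_i for i = 1,2. Then c is bijective and satisfies the braid equation (c ⊗ id)(id ⊗ c)(c ⊗ id) = (id ⊗ c)(c ⊗ id)(id ⊗ c) on V ⊗ V ⊗ V. -/
open TensorProduct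

theorem jordan_block_braiding_bijective_and_braid_equation
    (k : Type*) [Field k] (ε : k) (hε : ε ^ 2 = 1)
    (x : Fin 2 → (Fin 2 → k)) (hx : ∀ i, x i = Pi.single i 1)
    (c : ((Fin 2 → k) ⊗[k] (Fin 2 → k)) →ₗ[k] ((Fin 2 → k) ⊗[k] (Fin 2 → k)))
    (hc1 : ∀ i, c (x i ⊗ₜ[k] x 0) = (ε • x 0) ⊗ₜ[k] x i)
    (hc2 : ∀ i, c (x i ⊗ₜ[k] x 1) = (ε • x 1 + x 0) ⊗ₜ[k] x i) :
    let V := Fin 2 → k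
    let α := TensorProduct.assoc k V V V
    let c₁₂ : ((V ⊗[k] V) ⊗[k] V) →ₗ[k] ((V ⊗[k] V) ⊗[k] V) :=
      TensorProduct.map c LinearMap.id
    let c₂₃ : ((V ⊗[k] V) ⊗[k] V) →ₗ[k] ((V ⊗[k] V) ⊗[k] V) :=
      α.symm.toLinearMap ∘ₗ TensorProduct.map LinearMap.id c ∘ₗ α.toLinearMap
    Function.Bijective c ∧ c₁₂ ∘ₗ c₂₃ ∘ₗ c₁₂ = c₂₃ ∘ₗ c₁₂ ∘ₗ c₂₃ := by
  intro V α c₁₂ c₂₃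
  -- basic facts about the basis
  have hx01 : x 0 1 = (0 : k) := by rw [hx]; simp [Pi.single_apply]
  have hdecomp : ∀ v : Fin 2 → k, v = v 0 • x 0 + v 1 • x 1 := by
    intro v; funext j; fin_cases j <;> simp [hx, Pi.single_apply]
  -- the key formula for c on pure tensors
  have key : ∀ a b p q : k, c ((a • x 0 + b • x 1) ⊗ₜ[k] (p • x 0 + q • x 1)) =
      ((ε * p + q) • x 0 + (ε * q) • x 1) ⊗ₜ[k] (a • x 0 + b • x 1) := by
    intro a b p q
    simp only [tmul_add, add_tmul, smul_tmul, tmul_smul, map_add, map_smul,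
      hc1, hc2, smul_add, smul_smul]
    module
  have hrhs : ∀ w : Fin 2 → k, ε • w + w 1 • x 0 =
      (ε * w 0 + w 1) • x 0 + (ε * w 1) • x 1 := by
    intro w; funext j; fin_cases j <;> simp [hx, Pi.single_apply]
  have hcf : ∀ v w : Fin 2 → k, c (v ⊗ₜ[k] w) = (ε • w + w 1 • x 0) ⊗ₜ[k] v := by
    intro v w
    calc c (v ⊗ₜ[k] w)
        = c ((v 0 • x 0 + v 1 • x 1) ⊗ₜ[k] (w 0 • x 0 + w 1 • x 1)) := by
          rw [← hdecomp v, ← hdecomp w]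
      _ = ((ε * w 0 + w 1) • x 0 + (ε * w 1) • x 1) ⊗ₜ[k] (v 0 • x 0 + v 1 • x 1) :=
          key _ _ _ _
      _ = (ε • w + w 1 • x 0) ⊗ₜ[k] v := by rw [← hdecomp v, ← hrhs w]
  -- the linear maps f and g with c (v ⊗ w) = f w ⊗ v and g = f⁻¹
  set f : (Fin 2 → k) →ₗ[k] (Fin 2 → k) :=
    ε • LinearMap.id + (LinearMap.proj 1).smulRight (x 0) with hf
  set g : (Fin 2 → k) →ₗ[k] (Fin 2 → k) :=
    ε • LinearMap.id - (LinearMap.proj 1).smulRight (x 0) with hg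
  have hfap : ∀ v : Fin 2 → k, f v = ε • v + v 1 • x 0 := fun v => rfl
  have hgap : ∀ v : Fin 2 → k, g v = ε • v - v 1 • x 0 := fun v => rfl
  have hfg : ∀ v : Fin 2 → k, f (g v) = v := by
    intro v
    rw [hgap, hfap]
    have h1 : (ε • v - v 1 • x 0) 1 = ε * v 1 := by
      simp [Pi.sub_apply, Pi.smul_apply, hx01]
    rw [h1, smul_sub, smul_smul, ← pow_two, hε, one_smul, mul_smul]
    module
  have hgf : ∀ v : Fin 2 → k, g (f v) = v := by
    intro v
    rw [hfap, hgap]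
    have h1 : (ε • v + v 1 • x 0) 1 = ε * v 1 := by
      simp [Pi.add_apply, Pi.smul_apply, hx01]
    rw [h1, smul_add, smul_smul, ← pow_two, hε, one_smul, mul_smul]
    module
  constructor
  · -- bijectivity: exhibit an explicit two-sided inverse
    set d : ((Fin 2 → k) ⊗[k] (Fin 2 → k)) →ₗ[k] ((Fin 2 → k) ⊗[k] (Fin 2 → k)) :=
      (TensorProduct.comm k (Fin 2 → k) (Fin 2 → k)).toLinearMap ∘ₗ
        TensorProduct.map g LinearMap.id with hd
    have hdap : ∀ u v : Fin 2 → k, d (u ⊗ₜ[k] v) = v ⊗ₜ[k] g u := by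
      intro u v; simp [hd]
    have hcd : ∀ z, c (d z) = z := by
      have h : c ∘ₗ d = LinearMap.id := by
        apply TensorProduct.ext'
        intro u v
        simp only [LinearMap.comp_apply, hdap, hcf, LinearMap.id_apply]
        rw [← hfap, hfg]
      intro z
      have := LinearMap.congr_fun h z
      simpa using this
    have hdc : ∀ z, d (c z) = z := by
      have h : d ∘ₗ c = LinearMap.id := by
        apply TensorProduct.ext'
        intro v w
        simp only [LinearMap.comp_apply, hcf, hdap, LinearMap.id_apply]
        rw [← hfap, hgf]
      intro z
      have := LinearMap.congr_fun h z
      simpa using this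
    exact Function.bijective_iff_has_inverse.mpr ⟨d, hdc, hcd⟩
  · -- braid equation
    apply TensorProduct.ext_threefold
    intro u v w
    simp only [c₁₂, c₂₃, α, LinearMap.comp_apply, TensorProduct.map_tmul,
      LinearMap.id_apply, LinearEquiv.coe_coe, TensorProduct.assoc_tmul,
      TensorProduct.assoc_symm_tmul, hcf]
end

section
/- Let R be an associative ring, α, β, γ central elements of R, and u₀, u₁, u₂ ∈ R satisfying u₁u₀ = α·u₀u₁, u₂u₁ = α·u₁u₂, and u₂u₀ = β·u₀u₂ + γ·u₁². Then for all n ∈ ℕ: u₂·u₀ⁿ = βⁿ·u₀ⁿ·u₂ + γ·(∑_{j=0}^{n-1} β^j α^{2(n-1-j)})·u₀^{n-1}·u₁². -/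
theorem typeB2_straightening (R : Type*) [Ring R] (α β γ : R)
    (hα : ∀ r : R, Commute α r) (hβ : ∀ r : R, Commute β r) (hγ : ∀ r : R, Commute γ r)
    (u₀ u₁ u₂ : R)
    (h10 : u₁ * u₀ = α * (u₀ * u₁))
    (h21 : u₂ * u₁ = α * (u₁ * u₂))
    (h20 : u₂ * u₀ = β * (u₀ * u₂) + γ * u₁ ^ 2) :
    ∀ n : ℕ, u₂ * u₀ ^ n =
      β ^ n * (u₀ ^ n * u₂) +
        γ * (∑ j ∈ Finset.range n, β ^ j * α ^ (2 * (n - 1 - j))) * (u₀ ^ (n - 1) * u₁ ^ 2) := by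
  have pull : ∀ (c : R), (∀ r : R, Commute c r) → ∀ x y : R, x * (c * y) = c * (x * y) := by
    intro c hc x y
    rw [← mul_assoc, ← (hc x).eq, mul_assoc]
  have hα2 : ∀ r : R, Commute (α ^ 2) r := fun r => (hα r).pow_left 2
  have h110 : u₁ ^ 2 * u₀ = α ^ 2 * (u₀ * u₁ ^ 2) := by
    calc u₁ ^ 2 * u₀ = u₁ * (u₁ * u₀) := by rw [sq, mul_assoc]
      _ = u₁ * (α * (u₀ * u₁)) := by rw [h10]
      _ = α * (u₁ * (u₀ * u₁)) := pull α hα _ _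
      _ = α * ((u₁ * u₀) * u₁) := by rw [mul_assoc]
      _ = α * ((α * (u₀ * u₁)) * u₁) := by rw [h10]
      _ = α ^ 2 * (u₀ * u₁ ^ 2) := by simp [sq, mul_assoc]
  intro n
  induction n with
  | zero => simp
  | succ m ih =>
    rcases m with _ | k
    · simpa using h20
    · set k1 : ℕ := k + 1 with hk1
      have hS : ∑ j ∈ Finset.range (k1 + 1), β ^ j * α ^ (2 * (k1 + 1 - 1 - j)) =
          β ^ k1 + α ^ 2 * ∑ j ∈ Finset.range k1, β ^ j * α ^ (2 * (k1 - 1 - j)) := by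
        rw [Finset.sum_range_succ, Finset.mul_sum]
        have he : ∀ j ∈ Finset.range k1,
            β ^ j * α ^ (2 * (k1 + 1 - 1 - j)) = α ^ 2 * (β ^ j * α ^ (2 * (k1 - 1 - j))) := by
          intro j hj
          have hjk : j < k1 := Finset.mem_range.mp hj
          have : 2 * (k1 + 1 - 1 - j) = 2 * (k1 - 1 - j) + 2 := by omega
          rw [this, pow_add, ← mul_assoc]
          exact ((hα2 _).eq).symm
        rw [Finset.sum_congr rfl he]
        simp [add_comm]
      rw [hS]
      have step1 : u₂ * u₀ ^ (k1 + 1) = (u₂ * u₀ ^ k1) * u₀ := by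
        rw [pow_succ, ← mul_assoc]
      rw [step1, ih, add_mul]
      have t1 : (β ^ k1 * (u₀ ^ k1 * u₂)) * u₀ =
          β ^ (k1 + 1) * (u₀ ^ (k1 + 1) * u₂) + γ * β ^ k1 * (u₀ ^ k1 * u₁ ^ 2) := by
        calc (β ^ k1 * (u₀ ^ k1 * u₂)) * u₀ = β ^ k1 * (u₀ ^ k1 * (u₂ * u₀)) := by
              simp [mul_assoc]
          _ = β ^ k1 * (u₀ ^ k1 * (β * (u₀ * u₂))) + β ^ k1 * (u₀ ^ k1 * (γ * u₁ ^ 2)) := by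
              rw [h20, mul_add, mul_add]
          _ = β ^ (k1 + 1) * (u₀ ^ (k1 + 1) * u₂) + γ * β ^ k1 * (u₀ ^ k1 * u₁ ^ 2) := by
              rw [pull β hβ (u₀ ^ k1), pull γ hγ (u₀ ^ k1), pull γ hγ (β ^ k1),
                ← mul_assoc (β ^ k1) β, ← pow_succ β, ← mul_assoc γ, pow_succ u₀]
              simp [hk1, pow_succ, mul_assoc]
      have t2 : (γ * (∑ j ∈ Finset.range k1, β ^ j * α ^ (2 * (k1 - 1 - j))) *
            (u₀ ^ (k1 - 1) * u₁ ^ 2)) * u₀ =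
          γ * (α ^ 2 * ∑ j ∈ Finset.range k1, β ^ j * α ^ (2 * (k1 - 1 - j))) *
            (u₀ ^ k1 * u₁ ^ 2) := by
        set S : R := ∑ j ∈ Finset.range k1, β ^ j * α ^ (2 * (k1 - 1 - j)) with hSdef
        have hk1m : k1 - 1 = k := by omega
        rw [hk1m]
        calc (γ * S * (u₀ ^ k * u₁ ^ 2)) * u₀ = γ * S * (u₀ ^ k * (u₁ ^ 2 * u₀)) := by
              simp [mul_assoc]
          _ = γ * S * (u₀ ^ k * (α ^ 2 * (u₀ * u₁ ^ 2))) := by rw [h110]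
          _ = γ * S * (α ^ 2 * (u₀ ^ k * (u₀ * u₁ ^ 2))) := by rw [pull (α ^ 2) hα2 (u₀ ^ k)]
          _ = α ^ 2 * (γ * S * (u₀ ^ k * (u₀ * u₁ ^ 2))) := by rw [pull (α ^ 2) hα2 (γ * S)]
          _ = γ * (α ^ 2 * S) * (u₀ ^ k1 * u₁ ^ 2) := by
              rw [pow_succ u₀, mul_assoc γ (α ^ 2 * S), mul_assoc (α ^ 2) S,
                pull (α ^ 2) hα2 γ]
              simp [mul_assoc]
      rw [t1, t2, mul_add, add_mul]
      simp only [Nat.add_sub_cancel]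
      rw [add_assoc]
end
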